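/- arXiv:1811.05246 — 2 statements merged into one kernel-verified Lean document; each statement's English description precedes it below -/
import Mathlib

section
/- Let u ∈ {1, -1}, Q ≥ 5 a real number, and N a non-negative integer. Then there exist N+1 distinct primes p₁, …, p_{N+1}, all greater than Q and all congruent to ±1 mod 8, and an integer n with P² < n < 2P² (where P = p₁⋯p_{N+1}), such that 3n² ≡ m_j (mod p_j²) for j = 1, …, N+1, where m_j is the least positive integer with 2m_j ≡ 3 (mod p_j) and m_j ≡ u (mod 3). -/
private lemma crt2' (a b r1 r2 : ℤ) (h : IsCoprime a b) :
    ∃ n : ℤ, n ≡ r1 [ZMOD a] ∧ n ≡ r2 [ZMOD b] := by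
  obtain ⟨x, y, hxy⟩ := h
  refine ⟨r2 * (x * a) + r1 * (y * b), ?_, ?_⟩
  · rw [Int.modEq_iff_dvd]
    exact ⟨x * (r1 - r2), by linear_combination (-r1) * hxy⟩
  · rw [Int.modEq_iff_dvd]
    exact ⟨y * (r2 - r1), by linear_combination (-r2) * hxy⟩

private lemma invMod' (a : ℤ) (p : ℕ) (hp : p.Prime) (ha : ¬ (p : ℤ) ∣ a) :
    ∃ c : ℤ, a * c ≡ 1 [ZMOD (p : ℤ)] := by
  have hco : IsCoprime a (p : ℤ) := by
    rw [Int.isCoprime_iff_gcd_eq_one]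
    have : ¬ p ∣ a.natAbs := fun h => ha (Int.natCast_dvd.mpr h)
    simpa [Int.gcd] using (Nat.Prime.coprime_iff_not_dvd hp).mpr this |>.symm
  obtain ⟨x, y, hxy⟩ := hco
  refine ⟨x, ?_⟩
  rw [Int.modEq_iff_dvd]
  exact ⟨y, by linear_combination -hxy⟩

private lemma localSol' (p : ℕ) (hp : p.Prime) (hp5 : 5 < p) (h8 : p % 8 = 1 ∨ p % 8 = 7)
    (m : ℤ) (hm : 2 * m ≡ 3 [ZMOD (p : ℤ)]) :
    ∃ n : ℤ, 3 * n ^ 2 ≡ m [ZMOD (p : ℤ) ^ 2] := by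
  haveI : Fact p.Prime := ⟨hp⟩
  have hnd : ∀ k : ℤ, 0 < k → k < (p : ℤ) → ¬ (p : ℤ) ∣ k := by
    intro k hk hkp h
    have := Int.le_of_dvd hk h
    omega
  have hple : (5 : ℤ) < (p : ℤ) := by exact_mod_cast hp5
  have hpd3 : ¬ (p : ℤ) ∣ 3 := hnd 3 (by norm_num) (by omega)
  have hpdm : ¬ (p : ℤ) ∣ m := by
    intro h
    have h3 : (p : ℤ) ∣ 3 - 2 * m := Int.modEq_iff_dvd.mp hm
    exact hpd3 (by simpa using h3.add (h.mul_left 2))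
  -- square root of 2 mod p
  have hp2 : p ≠ 2 := by omega
  obtain ⟨s, hs⟩ := (ZMod.exists_sq_eq_two_iff hp2).mpr h8
  -- x with 3 x^2 ≡ m mod p, via ZMod p
  obtain ⟨c, hc⟩ := invMod' 3 p hp hpd3
  set x : ℤ := (s.val : ℤ) * m * c with hxdef
  have hmzp : ((2 * m : ℤ) : ZMod p) = ((3 : ℤ) : ZMod p) := (ZMod.intCast_eq_intCast_iff _ _ _).mpr hm
  have hczp : ((3 * c : ℤ) : ZMod p) = ((1 : ℤ) : ZMod p) := (ZMod.intCast_eq_intCast_iff _ _ _).mpr hc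
  have hsval : ((s.val : ℕ) : ZMod p) = s := by simp [ZMod.natCast_val, ZMod.cast_id]
  have hx : 3 * x ^ 2 ≡ m [ZMOD (p : ℤ)] := by
    rw [← ZMod.intCast_eq_intCast_iff]
    push_cast at hmzp hczp ⊢
    rw [hxdef]
    push_cast
    rw [hsval]
    linear_combination (3 * (m:ZMod p)^2 * (c:ZMod p)^2) * hs.symm + (3 * (m:ZMod p) * (c:ZMod p)^2) * hmzp + ((m : ZMod p) * (3*(c:ZMod p)+1)) * hczp
  -- Hensel lift
  have hpx : ¬ (p : ℤ) ∣ x := by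
    intro h
    have h2 := Int.modEq_iff_dvd.mp hx
    have h3 : (p : ℤ) ∣ 3 * x ^ 2 := (dvd_pow h two_ne_zero).mul_left 3
    exact hpdm (by simpa using h2.add h3)
  have hp6x : ¬ (p : ℤ) ∣ 6 * x := by
    intro h
    rcases ((Nat.prime_iff_prime_int.mp hp).dvd_mul.mp h) with h | h
    · exact hnd 6 (by norm_num) (by omega) h
    · exact hpx h
  obtain ⟨k, hk⟩ : ∃ k, 3 * x ^ 2 - m = (p : ℤ) * k := by
    obtain ⟨k, hk⟩ := Int.modEq_iff_dvd.mp hx.symm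
    exact ⟨k, hk⟩
  obtain ⟨ci, hci⟩ := invMod' (6 * x) p hp hp6x
  set t : ℤ := ci * (-k) with htdef
  have ht : (p : ℤ) ∣ k + 6 * x * t := by
    have h1 := Int.modEq_iff_dvd.mp hci  -- p ∣ 1 - 6*x*ci
    obtain ⟨w, hw⟩ := h1
    exact ⟨k * w, by linear_combination k * hw⟩
  obtain ⟨w, hw⟩ := ht
  refine ⟨x + t * (p : ℤ), ?_⟩
  rw [Int.modEq_iff_dvd]
  exact ⟨-(w + 3 * t ^ 2), by linear_combination (-1) * hk - (p : ℤ) * hw⟩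

private lemma crtFin' : ∀ {k : ℕ} (d r : Fin k → ℤ),
    (∀ i j, i ≠ j → IsCoprime (d i) (d j)) →
    ∃ n : ℤ, ∀ j, n ≡ r j [ZMOD d j] := by
  intro k
  induction k with
  | zero => exact fun d r _ => ⟨0, fun j => j.elim0⟩
  | succ k ih =>
    intro d r hco
    obtain ⟨ns, hns⟩ := ih (fun i => d i.succ) (fun i => r i.succ)
      (fun i j hij => hco i.succ j.succ (by simpa [Fin.succ_inj] using hij))
    have hcop : IsCoprime (d 0) (∏ i : Fin k, d i.succ) :=
      IsCoprime.prod_right fun i _ => hco 0 i.succ (Fin.succ_ne_zero i).symm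
    obtain ⟨n, hn0, hnP⟩ := crt2' (d 0) (∏ i : Fin k, d i.succ) (r 0) ns hcop
    refine ⟨n, fun j => ?_⟩
    refine Fin.cases ?_ (fun i => ?_) j
    · exact hn0
    · exact (hnP.of_dvd (Finset.dvd_prod_of_mem _ (Finset.mem_univ i))).trans (hns i)

private lemma primeSeqFull' (Q : ℝ) : ∃ q : ℕ → ℕ, StrictMono q ∧
    ∀ k, (q k).Prime ∧ Q < (q k : ℝ) ∧ q k % 8 = 1 := by
  have H : ∀ a : ℕ, ∃ p : ℕ, p.Prime ∧ max a ⌈Q⌉₊ < p ∧ p % 8 = 1 := by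
    intro a
    obtain ⟨p, hp, hlt, hmod⟩ := Nat.exists_prime_gt_modEq_one (k := 8) (max a ⌈Q⌉₊) (by norm_num)
    exact ⟨p, hp, hlt, by simpa [Nat.ModEq] using hmod⟩
  choose g hg using H
  set q : ℕ → ℕ := fun k => Nat.rec (g 0) (fun _ prev => g prev) k with hq
  have hqs : ∀ k, q (k + 1) = g (q k) := fun k => rfl
  have hprime : ∀ k, (q k).Prime := by
    intro k; cases k with
    | zero => exact (hg 0).1
    | succ k => rw [hqs]; exact (hg (q k)).1
  have hceil : ∀ k, ⌈Q⌉₊ < q k := by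
    intro k; cases k with
    | zero => exact lt_of_le_of_lt (le_max_right 0 _) (hg 0).2.1
    | succ k => exact lt_of_le_of_lt (le_max_right _ _) (hg (q k)).2.1
  have hmono : StrictMono q := by
    apply strictMono_nat_of_lt_succ
    intro k
    rw [hqs]
    exact lt_of_le_of_lt (le_max_left _ _) (hg (q k)).2.1
  refine ⟨q, hmono, fun k => ⟨hprime k, ?_, ?_⟩⟩
  · calc Q ≤ (⌈Q⌉₊ : ℝ) := Nat.le_ceil Q
      _ < (q k : ℝ) := by exact_mod_cast hceil k
  · cases k with
    | zero => exact (hg 0).2.2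
    | succ k => rw [hqs]; exact (hg (q k)).2.2

private lemma leastM' (u : ℤ) (p : ℕ) (hp : p.Prime) (hp5 : 5 < p) :
    ∃ m : ℤ, IsLeast {m : ℤ | 0 < m ∧ 2 * m ≡ 3 [ZMOD (p : ℤ)] ∧ m ≡ u [ZMOD 3]} m := by
  have hple : (5 : ℤ) < (p : ℤ) := by exact_mod_cast hp5
  have hpd2 : ¬ (p : ℤ) ∣ 2 := by
    intro h; have := Int.le_of_dvd (by norm_num) h; omega
  obtain ⟨c, hc⟩ := invMod' 2 p hp hpd2
  have hcop : IsCoprime ((p : ℤ)) (3 : ℤ) := by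
    rw [Int.isCoprime_iff_gcd_eq_one]
    have h3 : ¬ p ∣ 3 := fun h => by have := Nat.le_of_dvd (by norm_num) h; omega
    have : Nat.Coprime p 3 := (Nat.Prime.coprime_iff_not_dvd hp).mpr h3
    simpa [Int.gcd] using this
  obtain ⟨m₀, hm₀p, hm₀3⟩ := crt2' (p : ℤ) 3 (3 * c) u hcop
  set m : ℤ := m₀ + 3 * (p : ℤ) * (1 + |m₀|) with hmdef
  have hmem : m ∈ {m : ℤ | 0 < m ∧ 2 * m ≡ 3 [ZMOD (p : ℤ)] ∧ m ≡ u [ZMOD 3]} := by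
    refine ⟨?_, ?_, ?_⟩
    · have h1 : (1 : ℤ) ≤ 3 * (p : ℤ) := by omega
      have h2 : (0 : ℤ) ≤ |m₀| := abs_nonneg m₀
      have h3 : -m₀ ≤ |m₀| := neg_le_abs m₀
      nlinarith
    · have hmm : m ≡ m₀ [ZMOD (p : ℤ)] := by
        rw [Int.modEq_iff_dvd]
        exact ⟨-(3 * (1 + |m₀|)), by rw [hmdef]; ring⟩
      calc 2 * m ≡ 2 * m₀ [ZMOD (p : ℤ)] := hmm.mul_left 2
        _ ≡ 2 * (3 * c) [ZMOD (p : ℤ)] := hm₀p.mul_left 2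
        _ = 3 * (2 * c) := by ring
        _ ≡ 3 * 1 [ZMOD (p : ℤ)] := hc.mul_left 3
        _ = 3 := by ring
    · have hmm : m ≡ m₀ [ZMOD (3 : ℤ)] := by
        rw [Int.modEq_iff_dvd]
        exact ⟨-((p : ℤ) * (1 + |m₀|)), by rw [hmdef]; ring⟩
      exact hmm.trans hm₀3
  obtain ⟨lb, hlb, hmin⟩ := Int.exists_least_of_bdd
    (P := fun z => z ∈ {m : ℤ | 0 < m ∧ 2 * m ≡ 3 [ZMOD (p : ℤ)] ∧ m ≡ u [ZMOD 3]})
    ⟨0, fun z hz => le_of_lt hz.1⟩ ⟨m, hmem⟩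
  exact ⟨lb, hlb, fun z hz => hmin z hz⟩

theorem stmt_2 (u : ℤ) (hu : u = 1 ∨ u = -1) (Q : ℝ) (hQ : 5 ≤ Q) (N : ℕ) :
    ∃ p : Fin (N + 1) → ℕ, Function.Injective p ∧
      (∀ j, (p j).Prime ∧ Q < (p j : ℝ) ∧ (p j % 8 = 1 ∨ p j % 8 = 7)) ∧
      ∃ n : ℤ, (∏ j, (p j : ℤ)) ^ 2 < n ∧ n < 2 * (∏ j, (p j : ℤ)) ^ 2 ∧
        ∀ j, ∀ m : ℤ,
          IsLeast {m : ℤ | 0 < m ∧ 2 * m ≡ 3 [ZMOD (p j : ℤ)] ∧ m ≡ u [ZMOD 3]} m →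
          3 * n ^ 2 ≡ m [ZMOD (p j : ℤ) ^ 2] := by
  obtain ⟨q, hqmono, hq⟩ := primeSeqFull' Q
  set p : Fin (N + 1) → ℕ := fun j => q (j : ℕ) with hpdef
  have hpinj : Function.Injective p := fun a b hab =>
    Fin.ext (hqmono.injective hab)
  have hprime : ∀ j, (p j).Prime := fun j => (hq (j : ℕ)).1
  have hp5 : ∀ j : Fin (N + 1), 5 < p j := by
    intro j
    have h1 : (5 : ℝ) < (p j : ℝ) := lt_of_le_of_lt hQ (hq (j : ℕ)).2.1
    exact_mod_cast h1
  have hm : ∀ j : Fin (N + 1),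
      ∃ m, IsLeast {m : ℤ | 0 < m ∧ 2 * m ≡ 3 [ZMOD (p j : ℤ)] ∧ m ≡ u [ZMOD 3]} m :=
    fun j => leastM' u (p j) (hprime j) (hp5 j)
  choose mj hmj using hm
  have hmprop : ∀ j, 2 * mj j ≡ 3 [ZMOD (p j : ℤ)] := fun j => (hmj j).1.2.1
  have hsol : ∀ j, ∃ n, 3 * n ^ 2 ≡ mj j [ZMOD (p j : ℤ) ^ 2] :=
    fun j => localSol' (p j) (hprime j) (hp5 j) (Or.inl (hq (j : ℕ)).2.2) (mj j) (hmprop j)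
  choose nj hnj using hsol
  have hcopr : ∀ i j : Fin (N + 1), i ≠ j → IsCoprime ((p i : ℤ) ^ 2) ((p j : ℤ) ^ 2) := by
    intro i j hij
    have hne : p i ≠ p j := fun h => hij (hpinj h)
    have h1 : IsCoprime ((p i : ℤ)) ((p j : ℤ)) := by
      rw [Int.isCoprime_iff_gcd_eq_one]
      have : Nat.Coprime (p i) (p j) := (Nat.coprime_primes (hprime i) (hprime j)).mpr hne
      simpa [Int.gcd] using this
    exact h1.pow
  obtain ⟨n₀, hn₀⟩ := crtFin' (fun j => (p j : ℤ) ^ 2) nj hcopr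
  have hcong : ∀ j, 3 * n₀ ^ 2 ≡ mj j [ZMOD (p j : ℤ) ^ 2] :=
    fun j => (((hn₀ j).pow 2).mul_left 3).trans (hnj j)
  set P : ℤ := ∏ j, (p j : ℤ) with hPdef
  have hPpos : 0 < P := Finset.prod_pos fun j _ => by
    exact_mod_cast (hprime j).pos
  have hP2 : 0 < P ^ 2 := by positivity
  set r : ℤ := n₀ % P ^ 2 with hrdef
  have hr0 : 0 ≤ r := Int.emod_nonneg n₀ (ne_of_gt hP2)
  have hrlt : r < P ^ 2 := Int.emod_lt_of_pos n₀ hP2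
  have hdvdP : ∀ j : Fin (N + 1), (p j : ℤ) ^ 2 ∣ P ^ 2 := fun j =>
    pow_dvd_pow_of_dvd (Finset.dvd_prod_of_mem _ (Finset.mem_univ j)) 2
  have hrne : r ≠ 0 := by
    intro h
    have hd : P ^ 2 ∣ n₀ := Int.dvd_of_emod_eq_zero h
    have hd0 : (p 0 : ℤ) ^ 2 ∣ n₀ := dvd_trans (hdvdP 0) hd
    have hd1 : (p 0 : ℤ) ^ 2 ∣ 3 * n₀ ^ 2 := dvd_trans hd0 ⟨3 * n₀, by ring⟩
    have hmd : (p 0 : ℤ) ^ 2 ∣ mj 0 := by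
      simpa using (Int.modEq_iff_dvd.mp (hcong 0)).add hd1
    have hpm : (p 0 : ℤ) ∣ mj 0 := dvd_trans (dvd_pow_self _ two_ne_zero) hmd
    have hp3 : (p 0 : ℤ) ∣ 3 := by
      simpa using (Int.modEq_iff_dvd.mp (hmprop 0)).add (hpm.mul_left 2)
    have hle3 := Int.le_of_dvd (by norm_num) hp3
    have hple : (5 : ℤ) < (p 0 : ℤ) := by exact_mod_cast hp5 0
    omega
  refine ⟨p, hpinj, fun j => ⟨hprime j, (hq (j : ℕ)).2.1, Or.inl (hq (j : ℕ)).2.2⟩,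
    r + P ^ 2, ?_, ?_, ?_⟩
  · have : 0 < r := lt_of_le_of_ne hr0 (Ne.symm hrne)
    linarith
  · linarith
  · intro j m hle
    have heq : m = mj j := hle.unique (hmj j)
    rw [heq]
    have e1 : r ≡ n₀ [ZMOD P ^ 2] := Int.emod_emod_of_dvd n₀ dvd_rfl
    have e2 : r + P ^ 2 ≡ r [ZMOD P ^ 2] := by
      rw [Int.modEq_iff_dvd]
      exact ⟨-1, by ring⟩
    have h1 : r + P ^ 2 ≡ n₀ [ZMOD (p j : ℤ) ^ 2] := (e2.trans e1).of_dvd (hdvdP j)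
    exact (((h1.pow 2).mul_left 3).trans (hcong j))
end

section
/- For every positive integer N, the identity M(N²)/N² + Σ_{m=1}^N Σ_{n=1}^N K(m/N, n/N) μ(m)μ(n)/N² = M(N)(M(N)+4)/(2N²) - (Σ_{m=1}^N μ(m)/m)² holds, where K(x,y) = 1/2 + ⌊1/(xy)⌋ - 1/(xy) and M(x) = Σ_{n ≤ x} μ(n) denotes the Mertens function. -/
open ArithmeticFunction
open scoped ArithmeticFunction.Moebius
open scoped ArithmeticFunction.zeta

noncomputable def K (x y : ℝ) : ℝ := 1 / 2 + ⌊1 / (x * y)⌋ - 1 / (x * y)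

def M (n : ℕ) : ℤ := ∑ k ∈ Finset.Icc 1 n, μ k

lemma S_eq_one {x : ℕ} (hx : 1 ≤ x) :
    ∑ n ∈ Finset.Icc 1 x, (μ n : ℤ) * ((x / n : ℕ) : ℤ) = 1 := by
  have hIcc : Finset.Icc 1 x = Finset.Ioc 0 x := Finset.Icc_add_one_left_eq_Ioc 0 x
  have h1 : ∀ n ∈ Finset.Ioc 0 x, (μ n : ℤ) * ((x / n : ℕ) : ℤ)
      = ∑ j ∈ Finset.Ioc 0 x, if n ∣ j then (μ n : ℤ) else 0 := by
    intro n _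
    rw [← Finset.sum_filter, Finset.sum_const, ← Nat.Ioc_filter_dvd_card_eq_div x n]
    simp [mul_comm]
  rw [hIcc, Finset.sum_congr rfl h1, Finset.sum_comm]
  have h2 : ∀ j ∈ Finset.Ioc 0 x,
      (∑ n ∈ Finset.Ioc 0 x, if n ∣ j then (μ n : ℤ) else 0)
        = if j = 1 then 1 else 0 := by
    intro j hj
    simp only [Finset.mem_Ioc] at hj
    have hset : Finset.filter (· ∣ j) (Finset.Ioc 0 x) = j.divisors := by
      ext d
      simp only [Finset.mem_filter, Finset.mem_Ioc, Nat.mem_divisors]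
      constructor
      · rintro ⟨⟨_, _⟩, hd⟩; exact ⟨hd, by omega⟩
      · rintro ⟨hd, _⟩
        exact ⟨⟨Nat.pos_of_dvd_of_pos hd (by omega),
          le_trans (Nat.le_of_dvd (by omega) hd) hj.2⟩, hd⟩
    rw [← Finset.sum_filter, hset]
    calc ∑ d ∈ j.divisors, (μ d : ℤ)
        = (μ * (ζ : ArithmeticFunction ℤ)) j := coe_mul_zeta_apply.symm
      _ = (1 : ArithmeticFunction ℤ) j := by rw [moebius_mul_coe_zeta]
      _ = if j = 1 then 1 else 0 := one_apply
  rw [Finset.sum_congr rfl h2, Finset.sum_ite_eq' (Finset.Ioc 0 x) 1 (fun _ => (1:ℤ))]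
  simp [hx]

lemma div_mul_eq_zero {N m n : ℕ} (hm : 0 < m) (h : N ^ 2 / m < n) :
    N ^ 2 / (m * n) = 0 := by
  apply Nat.div_eq_of_lt
  by_contra hle
  push_neg at hle
  have h2 : n * m ≤ N ^ 2 := by rwa [Nat.mul_comm]
  have h3 := (Nat.le_div_iff_mul_le hm).mpr h2
  omega

lemma sum_extend (N m : ℕ) (hm : 0 < m) {a b : ℕ} (ha : N ^ 2 / m ≤ a) (hab : a ≤ b) :
    ∑ n ∈ Finset.Icc 1 b, (μ n : ℤ) * ((N ^ 2 / (m * n) : ℕ) : ℤ)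
      = ∑ n ∈ Finset.Icc 1 a, (μ n : ℤ) * ((N ^ 2 / (m * n) : ℕ) : ℤ) := by
  symm
  apply Finset.sum_subset (Finset.Icc_subset_Icc_right hab)
  intro n hn hna
  simp only [Finset.mem_Icc] at hn hna
  have hlt : N ^ 2 / m < n := by omega
  rw [div_mul_eq_zero hm hlt]
  simp

lemma T_eq (N : ℕ) (hN : 0 < N) :
    ∑ m ∈ Finset.Icc 1 N, ∑ n ∈ Finset.Icc 1 N,
        (μ m : ℤ) * ((μ n : ℤ) * ((N ^ 2 / (m * n) : ℕ) : ℤ))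
      = 2 * M N - M (N ^ 2) := by
  have hNN : N ≤ N ^ 2 := by nlinarith
  have key : ∀ m, 0 < m → m ≤ N ^ 2 →
      ∑ n ∈ Finset.Icc 1 (N ^ 2 / m), (μ n : ℤ) * ((N ^ 2 / (m * n) : ℕ) : ℤ) = 1 := by
    intro m hm hmN
    have h1 := S_eq_one ((Nat.one_le_div_iff hm).mpr hmN)
    rw [← h1]
    exact Finset.sum_congr rfl fun n _ => by rw [Nat.div_div_eq_div_mul]
  have hdisj : Disjoint (Finset.Icc 1 N) (Finset.Ioc N (N ^ 2)) := by
    rw [Finset.disjoint_left]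
    intro a ha ha'
    simp only [Finset.mem_Icc] at ha
    simp only [Finset.mem_Ioc] at ha'
    omega
  have hunion : Finset.Icc 1 N ∪ Finset.Ioc N (N ^ 2) = Finset.Icc 1 (N ^ 2) := by
    rw [show Finset.Icc 1 N = Finset.Ioc 0 N from Finset.Icc_add_one_left_eq_Ioc 0 N,
      show Finset.Icc 1 (N ^ 2) = Finset.Ioc 0 (N ^ 2) from Finset.Icc_add_one_left_eq_Ioc 0 (N ^ 2)]
    exact Finset.Ioc_union_Ioc_eq_Ioc (Nat.zero_le N) hNN
  have split : ∀ m, 0 < m → m ≤ N →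
      ∑ n ∈ Finset.Icc 1 (N ^ 2 / m), (μ n : ℤ) * ((N ^ 2 / (m * n) : ℕ) : ℤ)
        = (∑ n ∈ Finset.Icc 1 N, (μ n : ℤ) * ((N ^ 2 / (m * n) : ℕ) : ℤ))
          + ∑ n ∈ Finset.Ioc N (N ^ 2), (μ n : ℤ) * ((N ^ 2 / (m * n) : ℕ) : ℤ) := by
    intro m hm hmN
    rw [← sum_extend N m hm (le_refl (N ^ 2 / m)) (Nat.div_le_self _ _),
      ← Finset.sum_union hdisj, hunion]
  have hMN : M N = (∑ m ∈ Finset.Icc 1 N, (μ m : ℤ) *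
        ∑ n ∈ Finset.Icc 1 N, (μ n : ℤ) * ((N ^ 2 / (m * n) : ℕ) : ℤ))
      + ∑ m ∈ Finset.Icc 1 N, (μ m : ℤ) *
        ∑ n ∈ Finset.Ioc N (N ^ 2), (μ n : ℤ) * ((N ^ 2 / (m * n) : ℕ) : ℤ) := by
    rw [← Finset.sum_add_distrib, M]
    refine Finset.sum_congr rfl fun m hm => ?_
    simp only [Finset.mem_Icc] at hm
    rw [← mul_add, ← split m hm.1 hm.2, key m hm.1 (le_trans hm.2 hNN), mul_one]
  have hswap : ∑ m ∈ Finset.Ioc N (N ^ 2), (μ m : ℤ) *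
        ∑ n ∈ Finset.Icc 1 N, (μ n : ℤ) * ((N ^ 2 / (m * n) : ℕ) : ℤ)
      = ∑ m ∈ Finset.Icc 1 N, (μ m : ℤ) *
        ∑ n ∈ Finset.Ioc N (N ^ 2), (μ n : ℤ) * ((N ^ 2 / (m * n) : ℕ) : ℤ) := by
    simp only [Finset.mul_sum]
    rw [Finset.sum_comm]
    refine Finset.sum_congr rfl fun a _ => Finset.sum_congr rfl fun b _ => ?_
    rw [Nat.mul_comm b a]
    ring
  have hMN2 : M (N ^ 2) = ((∑ m ∈ Finset.Icc 1 N, (μ m : ℤ) *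
        ∑ n ∈ Finset.Icc 1 N, (μ n : ℤ) * ((N ^ 2 / (m * n) : ℕ) : ℤ))
      + ∑ m ∈ Finset.Icc 1 N, (μ m : ℤ) *
        ∑ n ∈ Finset.Ioc N (N ^ 2), (μ n : ℤ) * ((N ^ 2 / (m * n) : ℕ) : ℤ))
      + ∑ m ∈ Finset.Icc 1 N, (μ m : ℤ) *
        ∑ n ∈ Finset.Ioc N (N ^ 2), (μ n : ℤ) * ((N ^ 2 / (m * n) : ℕ) : ℤ) := by
    rw [M, ← hunion, Finset.sum_union hdisj, ← M, hMN, ← hswap]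
    congr 1
    refine Finset.sum_congr rfl fun m hm => ?_
    simp only [Finset.mem_Ioc] at hm
    have hm0 : 0 < m := by omega
    have hle : N ^ 2 / m ≤ N := Nat.div_le_of_le_mul (by nlinarith)
    rw [sum_extend N m hm0 le_rfl hle, key m hm0 hm.2, mul_one]
  simp only [Finset.mul_sum] at hMN hMN2 ⊢
  omega

lemma floor_nat_div (a b : ℕ) : ⌊(a : ℝ) / (b : ℝ)⌋ = ((a / b : ℕ) : ℤ) := by
  have h : ((a : ℝ) / (b : ℝ)) = (((a : ℚ) / (b : ℚ) : ℚ) : ℝ) := by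
    push_cast
    ring
  rw [h, Rat.floor_cast, Rat.floor_natCast_div_natCast]
  exact (Int.natCast_ediv a b).symm

theorem stmt_15 (N : ℕ) (hN : 0 < N) :
    (M (N ^ 2) : ℝ) / (N : ℝ) ^ 2 +
      ∑ m ∈ Finset.Icc 1 N, ∑ n ∈ Finset.Icc 1 N,
        K ((m : ℝ) / N) ((n : ℝ) / N) * ((μ m : ℝ) * (μ n : ℝ)) / (N : ℝ) ^ 2 =
    (M N : ℝ) * ((M N : ℝ) + 4) / (2 * (N : ℝ) ^ 2) -
      (∑ m ∈ Finset.Icc 1 N, (μ m : ℝ) / m) ^ 2 := by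
  have hNR : (0 : ℝ) < N := by exact_mod_cast hN
  have hterm : ∀ m ∈ Finset.Icc 1 N, ∀ n ∈ Finset.Icc 1 N,
      K ((m : ℝ) / N) ((n : ℝ) / N) * ((μ m : ℝ) * (μ n : ℝ)) / (N : ℝ) ^ 2
        = (μ m : ℝ) * (μ n : ℝ) / (2 * (N : ℝ) ^ 2)
          + ((N ^ 2 / (m * n) : ℕ) : ℝ) * ((μ m : ℝ) * (μ n : ℝ)) / (N : ℝ) ^ 2
          - ((μ m : ℝ) / m) * ((μ n : ℝ) / n) := by
    intro m hm n hn
    simp only [Finset.mem_Icc] at hm hn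
    have hmR : (0 : ℝ) < m := by exact_mod_cast hm.1
    have hnR : (0 : ℝ) < n := by exact_mod_cast hn.1
    have h1 : (1 : ℝ) / ((m / N : ℝ) * (n / N : ℝ)) = ((N ^ 2 : ℕ) : ℝ) / ((m * n : ℕ) : ℝ) := by
      push_cast
      field_simp
    rw [K, h1, floor_nat_div (N ^ 2) (m * n)]
    have hc : (((N ^ 2 / (m * n) : ℕ) : ℤ) : ℝ) = ((N ^ 2 / (m * n) : ℕ) : ℝ) := by push_cast; rfl
    rw [hc]
    push_cast
    field_simp
  rw [Finset.sum_congr rfl (fun m hm => Finset.sum_congr rfl (fun n hn => hterm m hm n hn))]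
  simp only [Finset.sum_add_distrib, Finset.sum_sub_distrib]
  have hMcast : (M N : ℝ) = ∑ m ∈ Finset.Icc 1 N, (μ m : ℝ) := by
    rw [M]; push_cast; rfl
  have hA : ∑ m ∈ Finset.Icc 1 N, ∑ n ∈ Finset.Icc 1 N,
      (μ m : ℝ) * (μ n : ℝ) / (2 * (N : ℝ) ^ 2)
        = (M N : ℝ) * (M N : ℝ) / (2 * (N : ℝ) ^ 2) := by
    rw [hMcast, Finset.sum_mul_sum]
    simp only [Finset.sum_div]
  have hC : ∑ m ∈ Finset.Icc 1 N, ∑ n ∈ Finset.Icc 1 N,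
      ((μ m : ℝ) / m) * ((μ n : ℝ) / n)
        = (∑ m ∈ Finset.Icc 1 N, (μ m : ℝ) / m) ^ 2 := by
    rw [sq, Finset.sum_mul_sum]
  have hB : ∑ m ∈ Finset.Icc 1 N, ∑ n ∈ Finset.Icc 1 N,
      ((N ^ 2 / (m * n) : ℕ) : ℝ) * ((μ m : ℝ) * (μ n : ℝ)) / (N : ℝ) ^ 2
        = (2 * (M N : ℝ) - (M (N ^ 2) : ℝ)) / (N : ℝ) ^ 2 := by
    have hTc := congrArg (Int.cast : ℤ → ℝ) (T_eq N hN)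
    simp only [Int.cast_sum, Int.cast_mul, Int.cast_natCast, Int.cast_sub,
      Int.cast_ofNat] at hTc
    simp only [← Finset.sum_div]
    rw [← hTc]
    congr 1
    exact Finset.sum_congr rfl fun m _ => Finset.sum_congr rfl fun n _ => by ring
  rw [hA, hB, hC]
  field_simp
  ring
end
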